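/- Let F > 1 be a real number and N ≥ 1, K ≥ 1 integers with K < N. For every advice assignment φ : {1,…,N} → {1,…,K} and every decision function g : {1,…,K} × ℕ → {accept, reject}, define for each input length m ∈ {1,…,N}: ALG(m) = F^t, where t is the least index t ≤ m with g(φ(m), t) = accept, and ALG(m) = 0 if no such t exists. Then there exists m ∈ {1,…,N} such that F · ALG(m) ≤ F^m; that is, on some input the algorithm's profit is at most OPT(m)/F, where OPT(m) = F^m. -/

import Mathlib

open Classical in
/-- Online single-selection maximization with weights `F, F², …`: for every real `F > 1`,
integers `N ≥ 1`, `K ≥ 1` with `K < N`, every advice assignment `φ : {1,…,N} → {1,…,K}`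
and every decision function `g`, there is an input length `m ∈ {1,…,N}` on which the
algorithm's profit `ALG(m)` — equal to `F^t` for the least round `t ∈ {1,…,m}` with
`g (φ m) t = accept`, and `0` if no round is accepted — satisfies `F · ALG(m) ≤ F^m`,
i.e. the profit is at most `OPT(m)/F` where `OPT(m) = F^m`. -/
theorem single_selection_advice_lower_bound
    (F : ℝ) (hF : 1 < F) (N K : ℕ) (hN : 1 ≤ N) (hK : 1 ≤ K) (hKN : K < N)
    (φ : ℕ → ℕ) (hφ : ∀ m ∈ Finset.Icc 1 N, φ m ∈ Finset.Icc 1 K)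
    (g : ℕ → ℕ → Bool) :
    ∃ m ∈ Finset.Icc 1 N,
      F * (if h : ∃ t, (1 ≤ t ∧ t ≤ m) ∧ g (φ m) t = true
            then F ^ (Nat.find h) else 0) ≤ F ^ m := by
  by_contra hc
  push_neg at hc
  have hF0 : (0:ℝ) < F := lt_trans one_pos hF
  -- For each m in range, there is an accepted round and Nat.find = m
  have key : ∀ m ∈ Finset.Icc 1 N,
      ∃ h : ∃ t, (1 ≤ t ∧ t ≤ m) ∧ g (φ m) t = true, Nat.find h = m := by
    intro m hm
    have hcm := hc m hm
    by_cases h : ∃ t, (1 ≤ t ∧ t ≤ m) ∧ g (φ m) t = true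
    · refine ⟨h, ?_⟩
      rw [dif_pos h] at hcm
      have hspec := Nat.find_spec h
      have hle : Nat.find h ≤ m := hspec.1.2
      -- F^m < F * F^(find) = F^(find+1), so m < find+1, so m ≤ find
      have : F ^ m < F ^ (Nat.find h + 1) := by
        rw [pow_succ]; linarith [hcm]
      have hm' : m < Nat.find h + 1 := (pow_lt_pow_iff_right₀ hF).mp this
      omega
    · rw [dif_neg h] at hcm
      have : (0:ℝ) < F ^ m := pow_pos hF0 m
      linarith
  -- pigeonhole
  have hcard : (Finset.Icc 1 K).card < (Finset.Icc 1 N).card := by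
    simp [Nat.card_Icc]; omega
  obtain ⟨a, ha, b, hb, hab, hfab⟩ :=
    Finset.exists_ne_map_eq_of_card_lt_of_maps_to hcard hφ
  -- wlog a < b
  rcases Nat.lt_or_ge a b with hlt | hge
  case _ =>
    obtain ⟨ha', hfa⟩ := key a ha
    obtain ⟨hb', hfb⟩ := key b hb
    have hg : g (φ a) a = true := by
      have := (Nat.find_spec ha').2; rwa [hfa] at this
    have : Nat.find hb' ≤ a := by
      apply Nat.find_le
      refine ⟨⟨?_, le_of_lt hlt⟩, by rwa [← hfab]⟩
      have := (Nat.find_spec ha').1.1; omega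
    omega
  case _ =>
    have hlt : b < a := lt_of_le_of_ne hge (fun h => hab h.symm)
    obtain ⟨ha', hfa⟩ := key a ha
    obtain ⟨hb', hfb⟩ := key b hb
    have hg : g (φ b) b = true := by
      have := (Nat.find_spec hb').2; rwa [hfb] at this
    have : Nat.find ha' ≤ b := by
      apply Nat.find_le
      refine ⟨⟨?_, le_of_lt hlt⟩, by rwa [hfab]⟩
      have := (Nat.find_spec hb').1.1; omega
    omega
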